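/- Let S be a ring with a family of orthogonal idempotents f_1, ..., f_a summing to an idempotent f, such that f_j S f_i = 0 unless |i - j| ≤ 1, and such that f_a S f_{a-1} S f_a = 0 and f_j S f_{j-1} S f_j ⊆ f_j S f_{j+1} S f_j for 2 ≤ j ≤ a-1. Define N = Σ_{j=1}^{a-1} (f_j S f_{j+1} + f_{j+1} S f_j + f_j S f_{j+1} S f_j). Then N is a two-sided ideal of the subring fSf, N² = Σ_{j=1}^{a-1} f_j S f_{j+1} S f_j, and N³ = 0. -/

import Mathlib

variable (F S : Type*) [Field F] [Ring S] [Algebra F S]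

/-- The subspace `f i * S * f j` of `S`. -/
noncomputable def peirceSub (f : ℤ → S) (i j : ℤ) : Submodule F S :=
  LinearMap.range ((LinearMap.mulLeft F (f i)).comp (LinearMap.mulRight F (f j)))

variable {F S}

lemma pr_mem {f : ℤ → S} {i j : ℤ} {x : S} :
    x ∈ peirceSub F S f i j ↔ ∃ s, f i * s * f j = x := by
  simp only [peirceSub, LinearMap.mem_range, LinearMap.comp_apply, LinearMap.mulLeft_apply,
    LinearMap.mulRight_apply, mul_assoc]

lemma pr_comp {f : ℤ → S} (hidem : ∀ i, f i * f i = f i) (i j l : ℤ) :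
    peirceSub F S f i j * peirceSub F S f j l ≤ peirceSub F S f i l := by
  rw [Submodule.mul_le]
  intro m hm n hn
  obtain ⟨s, rfl⟩ := pr_mem.mp hm
  obtain ⟨t, rfl⟩ := pr_mem.mp hn
  refine pr_mem.mpr ⟨s * f j * t, ?_⟩
  simp only [mul_assoc]
  rw [← mul_assoc (f j) (f j), hidem]

lemma pr_orth {f : ℤ → S} (horth : ∀ i j, i ≠ j → f i * f j = 0) {j k : ℤ} (h : j ≠ k)
    (i l : ℤ) : peirceSub F S f i j * peirceSub F S f k l = ⊥ := by
  rw [eq_bot_iff, Submodule.mul_le]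
  intro m hm n hn
  obtain ⟨s, rfl⟩ := pr_mem.mp hm
  obtain ⟨t, rfl⟩ := pr_mem.mp hn
  simp only [mul_assoc, Submodule.mem_bot]
  rw [← mul_assoc (f j) (f k), horth j k h]
  simp

lemma pr_far {f : ℤ → S} (hvanish : ∀ i j : ℤ, 2 ≤ |i - j| → ∀ s : S, f j * s * f i = 0)
    {i j : ℤ} (h : 2 ≤ |i - j|) : peirceSub F S f i j = ⊥ := by
  rw [eq_bot_iff]
  intro x hx
  obtain ⟨s, rfl⟩ := pr_mem.mp hx
  rw [Submodule.mem_bot]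
  exact hvanish j i (by rwa [abs_sub_comm]) s

lemma two_le_abs {m k : ℤ} (h : m + 2 ≤ k ∨ k + 2 ≤ m) : 2 ≤ |m - k| := by
  rcases h with h | h
  · rw [abs_sub_comm]
    calc (2 : ℤ) ≤ k - m := by omega
      _ ≤ |k - m| := le_abs_self _
  · calc (2 : ℤ) ≤ m - k := by omega
      _ ≤ |m - k| := le_abs_self _

lemma sum_le' {ι : Type*} {s : Finset ι} {M : ι → Submodule F S} {Q : Submodule F S}
    (h : ∀ j ∈ s, M j ≤ Q) : ∑ j ∈ s, M j ≤ Q := by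
  classical
  induction s using Finset.induction with
  | empty => simp
  | insert _ _ hx ih =>
    rw [Finset.sum_insert hx, Submodule.add_eq_sup]
    exact sup_le (h _ (Finset.mem_insert_self _ _))
      (ih fun j hj => h j (Finset.mem_insert_of_mem hj))

lemma le_sum' {ι : Type*} {s : Finset ι} {M : ι → Submodule F S} {j : ι} (hj : j ∈ s) :
    M j ≤ ∑ i ∈ s, M i := by
  classical
  induction s using Finset.induction with
  | empty => simp at hj
  | insert _ _ hx ih =>
    rw [Finset.sum_insert hx, Submodule.add_eq_sup]
    rcases Finset.mem_insert.mp hj with h | h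
    · subst h; exact le_sup_left
    · exact le_trans (ih h) le_sup_right

lemma add_le'' {X Y Q : Submodule F S} (h1 : X ≤ Q) (h2 : Y ≤ Q) : X + Y ≤ Q := by
  rw [Submodule.add_eq_sup]; exact sup_le h1 h2

variable (F S)


/-- Let `S` be a ring with orthogonal idempotents `f 1, ..., f a` summing to the
idempotent `f`, with `f j * S * f i = 0` unless `|i - j| ≤ 1`, with
`f a * S * f (a-1) * S * f a = 0` and
`f j * S * f (j-1) * S * f j ⊆ f j * S * f (j+1) * S * f j` for `2 ≤ j ≤ a-1`.
Set `N = Σ_{j=1}^{a-1} (f_j S f_{j+1} + f_{j+1} S f_j + f_j S f_{j+1} S f_j)`.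
Then `N` is a two-sided ideal of `fSf`, `N² = Σ_j f_j S f_{j+1} S f_j`, and
`N³ = 0`. -/
theorem ideal_filtration_of_schur_type
    (a : ℤ) (ha : 2 ≤ a) (f : ℤ → S)
    (hsupp : ∀ i : ℤ, (i < 1 ∨ a < i) → f i = 0)
    (hidem : ∀ i, f i * f i = f i)
    (horth : ∀ i j, i ≠ j → f i * f j = 0)
    (hvanish : ∀ i j : ℤ, 2 ≤ |i - j| → ∀ s : S, f j * s * f i = 0)
    (htop : ∀ s t : S, f a * s * f (a - 1) * t * f a = 0)
    (hincl : ∀ j : ℤ, 2 ≤ j → j ≤ a - 1 →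
      peirceSub F S f j (j-1) * peirceSub F S f (j-1) j
        ≤ peirceSub F S f j (j+1) * peirceSub F S f (j+1) j) :
    let N : Submodule F S := ∑ j ∈ Finset.Icc 1 (a-1),
      (peirceSub F S f j (j+1) + peirceSub F S f (j+1) j
        + peirceSub F S f j (j+1) * peirceSub F S f (j+1) j)
    let fSf : Submodule F S :=
      peirceSub F S (fun _ => ∑ i ∈ Finset.Icc 1 a, f i) 0 0
    (N ≤ fSf) ∧
    (∀ x ∈ fSf, ∀ n ∈ N, x * n ∈ N ∧ n * x ∈ N) ∧
    (N * N = ∑ j ∈ Finset.Icc 1 (a-1),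
      peirceSub F S f j (j+1) * peirceSub F S f (j+1) j) ∧
    (N * N * N = ⊥) := by
  classical
  intro N fSf
  have hNdef : N = ∑ j ∈ Finset.Icc 1 (a-1),
      (peirceSub F S f j (j+1) + peirceSub F S f (j+1) j
        + peirceSub F S f j (j+1) * peirceSub F S f (j+1) j) := rfl
  have hfar : ∀ {i j : ℤ}, 2 ≤ |i - j| → peirceSub F S f i j = ⊥ :=
    fun {i j} h => pr_far hvanish h
  have hcomp : ∀ i j l : ℤ, peirceSub F S f i j * peirceSub F S f j l ≤ peirceSub F S f i l :=
    pr_comp hidem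
  have horth2 : ∀ {j k : ℤ}, j ≠ k → ∀ i l : ℤ,
      peirceSub F S f i j * peirceSub F S f k l = ⊥ :=
    fun {j k} h i l => pr_orth horth h i l
  have hAA : ∀ i j : ℤ, peirceSub F S f i (i+1) * peirceSub F S f j (j+1) = ⊥ := by
    intro i j
    by_cases h : i + 1 = j
    · rw [← h]
      refine le_bot_iff.mp (le_trans (hcomp i (i+1) (i+1+1)) ?_)
      rw [hfar (two_le_abs (by omega))]
    · exact horth2 h _ _
  have hBB : ∀ i j : ℤ, peirceSub F S f (i+1) i * peirceSub F S f (j+1) j = ⊥ := by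
    intro i j
    by_cases h : i = j + 1
    · rw [h]
      refine le_bot_iff.mp (le_trans (hcomp (j+1+1) (j+1) j) ?_)
      rw [hfar (two_le_abs (by omega))]
    · exact horth2 h _ _
  have hBA : ∀ j : ℤ, 1 ≤ j → j ≤ a - 1 →
      peirceSub F S f (j+1) j * peirceSub F S f j (j+1) ≤
        ∑ m ∈ Finset.Icc 1 (a-1), peirceSub F S f m (m+1) * peirceSub F S f (m+1) m := by
    intro j h1 h2
    by_cases hj : j = a - 1
    · rw [hj]
      have hbot : peirceSub F S f (a-1+1) (a-1) * peirceSub F S f (a-1) (a-1+1) = ⊥ := by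
        rw [eq_bot_iff, Submodule.mul_le]
        intro m hm n hn
        obtain ⟨s, rfl⟩ := pr_mem.mp hm
        obtain ⟨t, rfl⟩ := pr_mem.mp hn
        rw [Submodule.mem_bot]
        have h3 : (a : ℤ) - 1 + 1 = a := by ring
        rw [h3]
        have h4 := htop s t
        simp only [mul_assoc] at h4 ⊢
        rw [← mul_assoc (f (a-1)) (f (a-1)), hidem]
        exact h4
      rw [hbot]
      exact bot_le
    · have h5 := hincl (j+1) (by omega) (by omega)
      rw [show (j : ℤ) + 1 - 1 = j by ring] at h5
      exact le_trans h5
        (le_sum' (M := fun m => peirceSub F S f m (m+1) * peirceSub F S f (m+1) m)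
          (Finset.mem_Icc.mpr ⟨by omega, by omega⟩))
  have hACsum : ∀ m : ℤ, peirceSub F S f m (m+1) *
      (∑ l ∈ Finset.Icc 1 (a-1), peirceSub F S f l (l+1) * peirceSub F S f (l+1) l) = ⊥ := by
    intro m
    rw [Finset.mul_sum]
    refine le_bot_iff.mp (sum_le' fun l _ => ?_)
    rw [← mul_assoc, hAA m l, Submodule.bot_mul]
  have hCsumB : ∀ m : ℤ,
      (∑ l ∈ Finset.Icc 1 (a-1), peirceSub F S f l (l+1) * peirceSub F S f (l+1) l) *
        peirceSub F S f (m+1) m = ⊥ := by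
    intro m
    rw [Finset.sum_mul]
    refine le_bot_iff.mp (sum_le' fun l _ => ?_)
    rw [mul_assoc, hBB l m, Submodule.mul_bot]
  have hCsumN :
      (∑ m ∈ Finset.Icc 1 (a-1), peirceSub F S f m (m+1) * peirceSub F S f (m+1) m) ≤ N := by
    rw [hNdef]
    refine sum_le' fun m hm => ?_
    refine le_trans ?_ (le_sum' hm)
    rw [Submodule.add_eq_sup]
    exact le_sup_right
  have hAN : ∀ j : ℤ, 1 ≤ j → j ≤ a - 1 → peirceSub F S f j (j+1) ≤ N := by
    intro j h1 h2
    rw [hNdef]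
    refine le_trans ?_ (le_sum' (Finset.mem_Icc.mpr ⟨h1, h2⟩))
    rw [Submodule.add_eq_sup, Submodule.add_eq_sup]
    exact le_trans le_sup_left le_sup_left
  have hBN : ∀ j : ℤ, 1 ≤ j → j ≤ a - 1 → peirceSub F S f (j+1) j ≤ N := by
    intro j h1 h2
    rw [hNdef]
    refine le_trans ?_ (le_sum' (Finset.mem_Icc.mpr ⟨h1, h2⟩))
    rw [Submodule.add_eq_sup, Submodule.add_eq_sup]
    exact le_trans le_sup_right le_sup_left
  -- left multiplication trichotomies
  have hPA : ∀ i k j : ℤ, 1 ≤ j → j ≤ a - 1 →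
      peirceSub F S f i k * peirceSub F S f j (j+1) ≤
        peirceSub F S f j (j+1) +
          ∑ m ∈ Finset.Icc 1 (a-1), peirceSub F S f m (m+1) * peirceSub F S f (m+1) m := by
    intro i k j h1 h2
    by_cases hk : k = j
    swap
    · rw [horth2 hk i (j+1)]; exact bot_le
    rw [hk]
    by_cases hij : i = j
    · rw [hij]
      refine le_trans (hcomp j j (j+1)) ?_
      rw [Submodule.add_eq_sup]; exact le_sup_left
    by_cases hij2 : i = j + 1
    · rw [hij2]
      refine le_trans (hBA j h1 h2) ?_
      rw [Submodule.add_eq_sup]; exact le_sup_right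
    by_cases hij3 : i = j - 1
    · rw [hij3]
      refine le_trans (hcomp (j-1) j (j+1)) ?_
      rw [hfar (two_le_abs (by omega))]
      exact bot_le
    · rw [hfar (i := i) (j := j) (two_le_abs (by omega)), Submodule.bot_mul]
      exact bot_le
  have hPB : ∀ i k j : ℤ, 1 ≤ j → j ≤ a - 1 →
      peirceSub F S f i k * peirceSub F S f (j+1) j ≤
        peirceSub F S f (j+1) j +
          ∑ m ∈ Finset.Icc 1 (a-1), peirceSub F S f m (m+1) * peirceSub F S f (m+1) m := by
    intro i k j h1 h2
    by_cases hk : k = j + 1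
    swap
    · rw [horth2 hk i j]; exact bot_le
    rw [hk]
    by_cases hij : i = j
    · rw [hij]
      refine le_trans (le_sum' (M := fun m => peirceSub F S f m (m+1) * peirceSub F S f (m+1) m)
        (Finset.mem_Icc.mpr ⟨h1, h2⟩)) ?_
      rw [Submodule.add_eq_sup]; exact le_sup_right
    by_cases hij2 : i = j + 1
    · rw [hij2]
      refine le_trans (hcomp (j+1) (j+1) j) ?_
      rw [Submodule.add_eq_sup]; exact le_sup_left
    by_cases hij3 : i = j + 2
    · rw [hij3]
      refine le_trans (hcomp (j+2) (j+1) j) ?_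
      rw [hfar (two_le_abs (by omega))]
      exact bot_le
    · rw [hfar (i := i) (j := j + 1) (two_le_abs (by omega)), Submodule.bot_mul]
      exact bot_le
  have hPC : ∀ i k j : ℤ, 1 ≤ j → j ≤ a - 1 →
      peirceSub F S f i k * (peirceSub F S f j (j+1) * peirceSub F S f (j+1) j) ≤
        ∑ m ∈ Finset.Icc 1 (a-1), peirceSub F S f m (m+1) * peirceSub F S f (m+1) m := by
    intro i k j h1 h2
    rw [← mul_assoc]
    refine le_trans (mul_le_mul' (hPA i k j h1 h2) le_rfl) ?_
    rw [add_mul]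
    refine add_le'' ?_ ?_
    · exact le_sum' (M := fun m => peirceSub F S f m (m+1) * peirceSub F S f (m+1) m)
        (Finset.mem_Icc.mpr ⟨h1, h2⟩)
    · rw [hCsumB j]; exact bot_le
  have hPN : ∀ i k : ℤ, peirceSub F S f i k * N ≤ N := by
    intro i k
    nth_rewrite 1 [hNdef]
    rw [Finset.mul_sum]
    refine sum_le' fun j hj => ?_
    obtain ⟨h1, h2⟩ := Finset.mem_Icc.mp hj
    rw [mul_add, mul_add]
    refine add_le'' (add_le'' ?_ ?_) ?_
    · exact le_trans (hPA i k j h1 h2) (add_le'' (hAN j h1 h2) hCsumN)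
    · exact le_trans (hPB i k j h1 h2) (add_le'' (hBN j h1 h2) hCsumN)
    · exact le_trans (hPC i k j h1 h2) hCsumN
  -- right multiplication trichotomies
  have hAP : ∀ j i k : ℤ, 1 ≤ j → j ≤ a - 1 →
      peirceSub F S f j (j+1) * peirceSub F S f i k ≤
        peirceSub F S f j (j+1) +
          ∑ m ∈ Finset.Icc 1 (a-1), peirceSub F S f m (m+1) * peirceSub F S f (m+1) m := by
    intro j i k h1 h2
    by_cases hi : j + 1 = i
    swap
    · rw [horth2 hi j k]; exact bot_le
    rw [← hi]
    by_cases hk : k = j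
    · rw [hk]
      refine le_trans (le_sum' (M := fun m => peirceSub F S f m (m+1) * peirceSub F S f (m+1) m)
        (Finset.mem_Icc.mpr ⟨h1, h2⟩)) ?_
      rw [Submodule.add_eq_sup]; exact le_sup_right
    by_cases hk2 : k = j + 1
    · rw [hk2]
      refine le_trans (hcomp j (j+1) (j+1)) ?_
      rw [Submodule.add_eq_sup]; exact le_sup_left
    by_cases hk3 : k = j + 2
    · rw [hk3]
      refine le_trans (hcomp j (j+1) (j+2)) ?_
      rw [hfar (two_le_abs (by omega))]
      exact bot_le
    · rw [hfar (i := j + 1) (j := k) (two_le_abs (by omega)), Submodule.mul_bot]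
      exact bot_le
  have hBP : ∀ j i k : ℤ, 1 ≤ j → j ≤ a - 1 →
      peirceSub F S f (j+1) j * peirceSub F S f i k ≤
        peirceSub F S f (j+1) j +
          ∑ m ∈ Finset.Icc 1 (a-1), peirceSub F S f m (m+1) * peirceSub F S f (m+1) m := by
    intro j i k h1 h2
    by_cases hi : j = i
    swap
    · rw [horth2 hi (j+1) k]; exact bot_le
    rw [← hi]
    by_cases hk : k = j
    · rw [hk]
      refine le_trans (hcomp (j+1) j j) ?_
      rw [Submodule.add_eq_sup]; exact le_sup_left
    by_cases hk2 : k = j + 1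
    · rw [hk2]
      refine le_trans (hBA j h1 h2) ?_
      rw [Submodule.add_eq_sup]; exact le_sup_right
    by_cases hk3 : k = j - 1
    · rw [hk3]
      refine le_trans (hcomp (j+1) j (j-1)) ?_
      rw [hfar (two_le_abs (by omega))]
      exact bot_le
    · rw [hfar (i := j) (j := k) (two_le_abs (by omega)), Submodule.mul_bot]
      exact bot_le
  have hCP : ∀ j i k : ℤ, 1 ≤ j → j ≤ a - 1 →
      (peirceSub F S f j (j+1) * peirceSub F S f (j+1) j) * peirceSub F S f i k ≤
        ∑ m ∈ Finset.Icc 1 (a-1), peirceSub F S f m (m+1) * peirceSub F S f (m+1) m := by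
    intro j i k h1 h2
    rw [mul_assoc]
    refine le_trans (mul_le_mul' le_rfl (hBP j i k h1 h2)) ?_
    rw [mul_add]
    refine add_le'' ?_ ?_
    · exact le_sum' (M := fun m => peirceSub F S f m (m+1) * peirceSub F S f (m+1) m)
        (Finset.mem_Icc.mpr ⟨h1, h2⟩)
    · rw [hACsum j]; exact bot_le
  have hNP : ∀ i k : ℤ, N * peirceSub F S f i k ≤ N := by
    intro i k
    nth_rewrite 1 [hNdef]
    rw [Finset.sum_mul]
    refine sum_le' fun j hj => ?_
    obtain ⟨h1, h2⟩ := Finset.mem_Icc.mp hj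
    rw [add_mul, add_mul]
    refine add_le'' (add_le'' ?_ ?_) ?_
    · exact le_trans (hAP j i k h1 h2) (add_le'' (hAN j h1 h2) hCsumN)
    · exact le_trans (hBP j i k h1 h2) (add_le'' (hBN j h1 h2) hCsumN)
    · exact le_trans (hCP j i k h1 h2) hCsumN
  have hfSfle : fSf ≤ ∑ i ∈ Finset.Icc 1 a, ∑ k ∈ Finset.Icc 1 a, peirceSub F S f i k := by
    intro x hx
    obtain ⟨s, rfl⟩ := pr_mem.mp hx
    show (∑ i ∈ Finset.Icc 1 a, f i) * s * (∑ i ∈ Finset.Icc 1 a, f i) ∈ _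
    rw [Finset.sum_mul, Finset.sum_mul]
    refine Submodule.sum_mem _ fun i hi => ?_
    rw [Finset.mul_sum]
    refine Submodule.sum_mem _ fun k hk => ?_
    refine le_sum' (M := fun i => ∑ k ∈ Finset.Icc 1 a, peirceSub F S f i k) hi ?_
    refine le_sum' (M := fun k => peirceSub F S f i k) hk ?_
    exact pr_mem.mpr ⟨s, by rw [mul_assoc]⟩
  have hPfSf : ∀ i k : ℤ, 1 ≤ i → i ≤ a → 1 ≤ k → k ≤ a → peirceSub F S f i k ≤ fSf := by
    intro i k hi1 hi2 hk1 hk2 x hx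
    obtain ⟨s, rfl⟩ := pr_mem.mp hx
    have habsL : (∑ m ∈ Finset.Icc 1 a, f m) * f i = f i := by
      rw [Finset.sum_mul, Finset.sum_eq_single i (fun b _ hb => horth b i hb)
        (fun hni => absurd (Finset.mem_Icc.mpr ⟨hi1, hi2⟩) hni), hidem]
    have habsR : f k * (∑ m ∈ Finset.Icc 1 a, f m) = f k := by
      rw [Finset.mul_sum, Finset.sum_eq_single k (fun b _ hb => horth k b (Ne.symm hb))
        (fun hnk => absurd (Finset.mem_Icc.mpr ⟨hk1, hk2⟩) hnk), hidem]
    refine pr_mem.mpr ⟨f i * s * f k, ?_⟩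
    show (∑ m ∈ Finset.Icc 1 a, f m) * (f i * s * f k) * (∑ m ∈ Finset.Icc 1 a, f m)
      = f i * s * f k
    calc (∑ m ∈ Finset.Icc 1 a, f m) * (f i * s * f k) * (∑ m ∈ Finset.Icc 1 a, f m)
        = ((∑ m ∈ Finset.Icc 1 a, f m) * f i) * (s *
            (f k * (∑ m ∈ Finset.Icc 1 a, f m))) := by simp only [mul_assoc]
      _ = f i * s * f k := by rw [habsL, habsR, mul_assoc]
  have hNfSf : N ≤ fSf := by
    rw [hNdef]
    refine sum_le' fun j hj => ?_
    obtain ⟨h1, h2⟩ := Finset.mem_Icc.mp hj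
    refine add_le'' (add_le'' ?_ ?_) ?_
    · exact hPfSf j (j+1) (by omega) (by omega) (by omega) (by omega)
    · exact hPfSf (j+1) j (by omega) (by omega) (by omega) (by omega)
    · exact le_trans (hcomp j (j+1) j) (hPfSf j j (by omega) (by omega) (by omega) (by omega))
  have hNA : ∀ j : ℤ, 1 ≤ j → j ≤ a - 1 →
      N * peirceSub F S f j (j+1) ≤
        ∑ m ∈ Finset.Icc 1 (a-1), peirceSub F S f m (m+1) * peirceSub F S f (m+1) m := by
    intro j h1 h2
    nth_rewrite 1 [hNdef]
    rw [Finset.sum_mul]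
    refine sum_le' fun m hm => ?_
    rw [add_mul, add_mul]
    refine add_le'' (add_le'' ?_ ?_) ?_
    · rw [hAA m j]; exact bot_le
    · by_cases hmj : m = j
      · rw [hmj]; exact hBA j h1 h2
      · rw [horth2 hmj (m+1) (j+1)]; exact bot_le
    · rw [mul_assoc]
      by_cases hmj : m = j
      · rw [hmj]
        refine le_trans (mul_le_mul' le_rfl (hBA j h1 h2)) ?_
        rw [hACsum j]
        exact bot_le
      · rw [horth2 hmj (m+1) (j+1), Submodule.mul_bot]; exact bot_le
  have hNB : ∀ j : ℤ, 1 ≤ j → j ≤ a - 1 →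
      N * peirceSub F S f (j+1) j ≤
        ∑ m ∈ Finset.Icc 1 (a-1), peirceSub F S f m (m+1) * peirceSub F S f (m+1) m := by
    intro j h1 h2
    nth_rewrite 1 [hNdef]
    rw [Finset.sum_mul]
    refine sum_le' fun m hm => ?_
    rw [add_mul, add_mul]
    refine add_le'' (add_le'' ?_ ?_) ?_
    · by_cases hmj : m = j
      · rw [hmj]
        exact le_sum' (M := fun m => peirceSub F S f m (m+1) * peirceSub F S f (m+1) m)
          (Finset.mem_Icc.mpr ⟨h1, h2⟩)
      · rw [horth2 (show m + 1 ≠ j + 1 by omega) m j]; exact bot_le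
    · rw [hBB m j]; exact bot_le
    · rw [mul_assoc, hBB m j, Submodule.mul_bot]; exact bot_le
  have hNN : N * N = ∑ m ∈ Finset.Icc 1 (a-1),
      peirceSub F S f m (m+1) * peirceSub F S f (m+1) m := by
    refine le_antisymm ?_ ?_
    · nth_rewrite 2 [hNdef]
      rw [Finset.mul_sum]
      refine sum_le' fun j hj => ?_
      obtain ⟨h1, h2⟩ := Finset.mem_Icc.mp hj
      rw [mul_add, mul_add]
      refine add_le'' (add_le'' (hNA j h1 h2) (hNB j h1 h2)) ?_
      rw [← mul_assoc]
      refine le_trans (mul_le_mul' (hNA j h1 h2) le_rfl) ?_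
      rw [hCsumB j]
      exact bot_le
    · refine sum_le' fun j hj => ?_
      obtain ⟨h1, h2⟩ := Finset.mem_Icc.mp hj
      exact mul_le_mul' (hAN j h1 h2) (hBN j h1 h2)
  refine ⟨hNfSf, ?_, hNN, ?_⟩
  · intro x hx n hn
    constructor
    · have hle : (∑ i ∈ Finset.Icc 1 a, ∑ k ∈ Finset.Icc 1 a, peirceSub F S f i k) * N ≤ N := by
        rw [Finset.sum_mul]
        refine sum_le' fun i _ => ?_
        rw [Finset.sum_mul]
        exact sum_le' fun k _ => hPN i k
      exact hle (Submodule.mul_mem_mul (hfSfle hx) hn)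
    · have hle : N * (∑ i ∈ Finset.Icc 1 a, ∑ k ∈ Finset.Icc 1 a, peirceSub F S f i k) ≤ N := by
        rw [Finset.mul_sum]
        refine sum_le' fun i _ => ?_
        rw [Finset.mul_sum]
        exact sum_le' fun k _ => hNP i k
      exact hle (Submodule.mul_mem_mul hn (hfSfle hx))
  · rw [hNN]
    refine le_bot_iff.mp ?_
    rw [Finset.sum_mul]
    refine sum_le' fun j hj => ?_
    obtain ⟨h1, h2⟩ := Finset.mem_Icc.mp hj
    rw [mul_assoc]
    have hBjN : peirceSub F S f (j+1) j * N ≤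
        ∑ m ∈ Finset.Icc 1 (a-1), peirceSub F S f m (m+1) * peirceSub F S f (m+1) m := by
      nth_rewrite 1 [hNdef]
      rw [Finset.mul_sum]
      refine sum_le' fun m hm => ?_
      rw [mul_add, mul_add]
      refine add_le'' (add_le'' ?_ ?_) ?_
      · by_cases hmj : j = m
        · rw [← hmj]; exact hBA j h1 h2
        · rw [horth2 hmj (j+1) (m+1)]; exact bot_le
      · rw [hBB j m]; exact bot_le
      · rw [← mul_assoc]
        by_cases hmj : j = m
        · rw [← hmj]
          refine le_trans (mul_le_mul' (hBA j h1 h2) le_rfl) ?_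
          rw [hCsumB j]
          exact bot_le
        · rw [horth2 hmj (j+1) (m+1), Submodule.bot_mul]; exact bot_le
    refine le_trans (mul_le_mul' le_rfl hBjN) ?_
    rw [hACsum j]
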